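/- If a prime p can be written p = a^2 + 4b^2 with a, b integers, then p ≡ 1 (mod 4) and the Pell-type equation T^2 - p·U^2 = -1 has integer solutions. -/

import Mathlib

private lemma sq_mod_four (z : ℤ) : z ^ 2 % 4 = 0 ∨ z ^ 2 % 4 = 1 := by
  rcases Int.even_or_odd z with ⟨k, rfl⟩ | ⟨k, rfl⟩
  · left
    have : (k + k) ^ 2 = 4 * k ^ 2 := by ring
    rw [this]
    exact Int.mul_emod_right 4 _
  · right
    have h1 : (2 * k + 1) ^ 2 = (k ^ 2 + k) * 4 + 1 := by ring
    omega

set_option maxHeartbeats 1000000 in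
/-- Kaplansky: if a prime p = a² + 4b², then p ≡ 1 (mod 4) and
T² - pU² = -1 is solvable in integers. -/
theorem stmt_6 (p : ℕ) (hp : p.Prime) (a b : ℤ)
    (h : (p : ℤ) = a ^ 2 + 4 * b ^ 2) :
    p % 4 = 1 ∧ ∃ T U : ℤ, T ^ 2 - (p : ℤ) * U ^ 2 = -1 := by
  -- First: p % 4 = 1.
  have hpmod : (p : ℤ) % 4 = 1 := by
    have h4 : (p : ℤ) % 4 = a ^ 2 % 4 := by
      have hrw : (p : ℤ) = a ^ 2 + b ^ 2 * 4 := by linarith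
      rw [hrw, Int.add_mul_emod_self_right]
    rcases sq_mod_four a with h0 | h1
    · exfalso
      have hdvd : (4 : ℤ) ∣ (p : ℤ) := Int.dvd_of_emod_eq_zero (h4.trans h0)
      have hdvd' : (4 : ℕ) ∣ p := by exact_mod_cast hdvd
      rcases (hp.eq_one_or_self_of_dvd 4 hdvd') with h' | h'
      · norm_num at h'
      · rw [← h'] at hp; norm_num at hp
    · omega
  have hpm4 : p % 4 = 1 := by omega
  refine ⟨hpm4, ?_⟩
  have hp2 := hp.two_le
  have hp5 : 5 ≤ p := by omega
  have hp0 : (0 : ℤ) < (p : ℤ) := by exact_mod_cast hp.pos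
  have hpZ : Prime ((p : ℤ)) := Nat.prime_iff_prime_int.mp hp
  have hpns : ¬IsSquare ((p : ℤ)) := hpZ.not_isSquare
  -- fundamental solution
  obtain ⟨a₁, hfund⟩ := Pell.IsFundamental.exists_of_not_isSquare hp0 hpns
  have hprop : a₁.x ^ 2 - (p : ℤ) * a₁.y ^ 2 = 1 := a₁.prop
  have hx1 : 1 < a₁.x := hfund.1
  have hpymod : ((p : ℤ) * a₁.y ^ 2) % 4 = a₁.y ^ 2 % 4 := by
    rw [Int.mul_emod, hpmod]; simp [Int.emod_emod_of_dvd]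
  have key1 : ∀ X Y C : ℤ, X - C = 1 → C % 4 = Y % 4 → X % 4 = 0 →
      Y % 4 = 0 ∨ Y % 4 = 1 → False := by omega
  have key2 : ∀ X Y C : ℤ, X - C = 1 → C % 4 = Y % 4 → X % 4 = 1 →
      Y % 4 = 1 → False := by omega
  -- x is odd
  have hxodd : Odd a₁.x := by
    rcases Int.even_or_odd a₁.x with ⟨k, hk2⟩ | hod
    · exfalso
      have e1 : a₁.x ^ 2 % 4 = 0 := by
        rw [hk2]
        have : (k + k) ^ 2 = 4 * k ^ 2 := by ring
        rw [this]; exact Int.mul_emod_right 4 _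
      exact key1 _ _ _ hprop hpymod e1 (sq_mod_four a₁.y)
    · exact hod
  -- y is even
  have hyeven : Even a₁.y := by
    rcases Int.even_or_odd a₁.y with hev | ⟨k, hk2⟩
    · exact hev
    · exfalso
      obtain ⟨m, hm⟩ := hxodd
      have e1 : a₁.x ^ 2 % 4 = 1 := by
        rw [hm]
        have h1 : (2 * m + 1) ^ 2 = (m ^ 2 + m) * 4 + 1 := by ring
        omega
      have e2 : a₁.y ^ 2 % 4 = 1 := by
        rw [hk2]
        have h1 : (2 * k + 1) ^ 2 = (k ^ 2 + k) * 4 + 1 := by ring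
        omega
      exact key2 _ _ _ hprop hpymod e1 e2
  obtain ⟨m, hm⟩ := hxodd
  obtain ⟨k, hk⟩ := hyeven
  have hm1 : 1 ≤ m := by omega
  have hkey : m * (m + 1) = (p : ℤ) * k ^ 2 := by
    have h2 := hprop
    rw [hm, hk] at h2
    have h4 : 4 * (m * (m + 1)) = 4 * ((p : ℤ) * k ^ 2) := by linear_combination h2
    exact mul_left_cancel₀ (by norm_num) h4
  have hcop : IsCoprime m (m + 1) := ⟨-1, 1, by ring⟩
  have hdvd : (p : ℤ) ∣ m * (m + 1) := ⟨k ^ 2, hkey⟩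
  rcases hpZ.dvd_mul.mp hdvd with hpm | hpm1
  · -- p ∣ m : contradiction with minimality of the fundamental solution
    exfalso
    obtain ⟨s, hs⟩ := hpm
    have hcancel : s * (m + 1) = k ^ 2 := by
      have h2 : (p : ℤ) * (s * (m + 1)) = (p : ℤ) * k ^ 2 := by rw [← hkey, hs]; ring
      exact mul_left_cancel₀ hp0.ne' h2
    have hs1 : 1 ≤ s := by nlinarith [hm1, hp0, hs]
    have hsdvd : s ∣ m := Dvd.intro_left _ hs.symm
    have hcop2 : IsCoprime s (m + 1) := hcop.of_isCoprime_of_dvd_left hsdvd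
    obtain ⟨v, hv⟩ := Int.sq_of_isCoprime hcop2 hcancel
    obtain ⟨u, hu⟩ := Int.sq_of_isCoprime hcop2.symm (by rw [mul_comm]; exact hcancel)
    have hvsq : s = v ^ 2 := by rcases hv with h' | h' <;> nlinarith [sq_nonneg v]
    have husq : m + 1 = u ^ 2 := by rcases hu with h' | h' <;> nlinarith [sq_nonneg u]
    have hsol : |u| ^ 2 - (p : ℤ) * v ^ 2 = 1 := by
      rw [sq_abs, ← husq, ← hvsq, hs]; ring
    have hmp : (p : ℤ) ≤ m := by nlinarith [hvsq, hs1, hs]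
    have hp5' : (5 : ℤ) ≤ (p : ℤ) := by exact_mod_cast hp5
    have hu2 : 6 ≤ u ^ 2 := by nlinarith
    have habs1 : 1 < |u| := by nlinarith [abs_nonneg u, sq_abs u]
    have hle : a₁.x ≤ (Pell.Solution₁.mk (|u|) v hsol).x := hfund.x_le_x (by simpa using habs1)
    simp only [Pell.Solution₁.x_mk] at hle
    have hlt : |u| < a₁.x := by nlinarith [sq_abs u, abs_nonneg u]
    omega
  · -- p ∣ m + 1 : gives the negative Pell solution
    obtain ⟨s, hs⟩ := hpm1
    have hcancel : m * s = k ^ 2 := by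
      have h2 : (p : ℤ) * (m * s) = (p : ℤ) * k ^ 2 := by rw [← hkey, hs]; ring
      exact mul_left_cancel₀ hp0.ne' h2
    have hsdvd : s ∣ m + 1 := Dvd.intro_left _ hs.symm
    have hcop2 : IsCoprime m s := hcop.of_isCoprime_of_dvd_right hsdvd
    obtain ⟨u, hu⟩ := Int.sq_of_isCoprime hcop2 hcancel
    obtain ⟨v, hv⟩ := Int.sq_of_isCoprime hcop2.symm (by rw [mul_comm]; exact hcancel)
    have hs1 : 1 ≤ s := by nlinarith [hm1, hp0, hs]
    have husq : m = u ^ 2 := by rcases hu with h' | h' <;> nlinarith [sq_nonneg u]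
    have hvsq : s = v ^ 2 := by rcases hv with h' | h' <;> nlinarith [sq_nonneg v]
    exact ⟨u, v, by rw [← husq, ← hvsq, ← hs]; ring⟩
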